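/- Let D_E be an m-dimensional complex vector space and D_V a 2-dimensional complex vector space, and let φ be a ℂ-linear endomorphism of D_E ⊗ D_V. Then φ is tree-compatible if, and only if, there exist a basis (a_1,…,a_m) of D_E, a basis (b_1, b_2) of D_V, and matrices A = (a_{ij}), B = (b_{ij}) ∈ M_m(ℂ) such that the matrix of φ in the basis (a_1 ⊗ b_1, a_1 ⊗ b_2, …, a_m ⊗ b_1, a_m ⊗ b_2) is the 2m × 2m block matrix whose (i,j) 2×2 block is J(a_{ij}, b_{ij}) for all i, j, or the 2m × 2m block matrix whose (i,j) 2×2 block is D(a_{ij}, b_{ij}) for all i, j. -/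

import Mathlib

open TensorProduct

/-- The endomorphism `φ₁₃ = (τ ⊗ id) ∘ (id ⊗ φ) ∘ (τ ⊗ id)` of `D_E ⊗ D_E ⊗ D_V`,
where `τ` is the flip of the first two factors. -/
noncomputable def phi13 (K : Type*) [CommSemiring K] (E V : Type*)
    [AddCommMonoid E] [Module K E] [AddCommMonoid V] [Module K V]
    (φ : TensorProduct K E V →ₗ[K] TensorProduct K E V) :
    TensorProduct K E (TensorProduct K E V) →ₗ[K] TensorProduct K E (TensorProduct K E V) :=
  (TensorProduct.leftComm K E E V).toLinearMap ∘ₗ LinearMap.lTensor E φ ∘ₗ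
    (TensorProduct.leftComm K E E V).toLinearMap

/-- `φ` is tree-compatible if `φ₁₃ ∘ φ₂₃ = φ₂₃ ∘ φ₁₃`, where `φ₂₃ = id ⊗ φ`. -/
noncomputable def TreeCompatible (K : Type*) [CommSemiring K] (E V : Type*)
    [AddCommMonoid E] [Module K E] [AddCommMonoid V] [Module K V]
    (φ : TensorProduct K E V →ₗ[K] TensorProduct K E V) : Prop :=
  phi13 K E V φ ∘ₗ LinearMap.lTensor E φ = LinearMap.lTensor E φ ∘ₗ phi13 K E V φ
namespace TreeAux

open TensorProduct

variable {E V : Type*} [AddCommGroup E] [Module ℂ E] [AddCommGroup V] [Module ℂ V]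

/-- insertion `e ↦ e ⊗ v` -/
noncomputable def ins (v : V) : E →ₗ[ℂ] TensorProduct ℂ E V := (TensorProduct.mk ℂ E V).flip v

@[simp] lemma ins_apply (v : V) (e : E) : (ins v : E →ₗ[ℂ] _) e = e ⊗ₜ[ℂ] v := rfl

lemma phi13_tmul (φ : TensorProduct ℂ E V →ₗ[ℂ] TensorProduct ℂ E V) (x y : E) (v : V) :
    phi13 ℂ E V φ (x ⊗ₜ[ℂ] (y ⊗ₜ[ℂ] v)) =
      (TensorProduct.leftComm ℂ E E V) (y ⊗ₜ[ℂ] φ (x ⊗ₜ[ℂ] v)) := by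
  simp [phi13, TensorProduct.leftComm_tmul]

lemma tensor_dep (f g : E →ₗ[ℂ] E)
    (h : ∀ x y : E, f x ⊗ₜ[ℂ] g y = g x ⊗ₜ[ℂ] f y) :
    (∃ c : ℂ, g = c • f) ∨ (∃ c : ℂ, f = c • g) := by
  by_cases hf : f = 0
  · exact Or.inr ⟨0, by simp [hf]⟩
  · left
    obtain ⟨e, he⟩ : ∃ e, f e ≠ 0 := by
      by_contra hcon; push_neg at hcon; exact hf (LinearMap.ext hcon)
    obtain ⟨ξ, hξ⟩ : ∃ ξ : Module.Dual ℂ E, ξ (f e) ≠ 0 := by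
      by_contra hcon; push_neg at hcon
      exact he ((Module.forall_dual_apply_eq_zero_iff ℂ (f e)).mp hcon)
    refine ⟨(ξ (f e))⁻¹ * ξ (g e), ?_⟩
    ext y
    have hy := congrArg (TensorProduct.lift ((LinearMap.lsmul ℂ E) ∘ₗ ξ)) (h e y)
    simp only [TensorProduct.lift.tmul, LinearMap.comp_apply, LinearMap.lsmul_apply] at hy
    -- hy : ξ (f e) • g y = ξ (g e) • f y
    simp only [LinearMap.smul_apply]
    calc g y = (ξ (f e))⁻¹ • (ξ (f e) • g y) := by
          rw [smul_smul, inv_mul_cancel₀ hξ, one_smul]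
      _ = (ξ (f e))⁻¹ • (ξ (g e) • f y) := by rw [hy]
      _ = ((ξ (f e))⁻¹ * ξ (g e)) • f y := by rw [smul_smul]

lemma pair_li {v w : V} (hv : v ≠ 0) (hw : w ∉ Submodule.span ℂ {v}) :
    LinearIndependent ℂ ![v, w] := by
  rw [linearIndependent_fin2]
  refine ⟨?_, ?_⟩
  · simp only [Matrix.cons_val_one, Matrix.head_cons]
    rintro rfl; exact hw (Submodule.zero_mem _)
  · simp only [Matrix.cons_val_one, Matrix.head_cons, Matrix.cons_val_zero]
    intro a ha
    rcases eq_or_ne a 0 with rfl | h0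
    · rw [zero_smul] at ha; exact hv ha.symm
    · exact hw (Submodule.mem_span_singleton.mpr
        ⟨a⁻¹, by rw [← ha, smul_smul, inv_mul_cancel₀ h0, one_smul]⟩)

lemma jordan2 {V : Type*} [AddCommGroup V] [Module ℂ V] [FiniteDimensional ℂ V]
    (hV : Module.finrank ℂ V = 2) (μ : V →ₗ[ℂ] V) :
    ∃ (b : Module.Basis (Fin 2) ℂ V) (lam : ℂ),
      (μ (b 0) = lam • b 0 ∧ μ (b 1) = b 0 + lam • b 1) ∨
      (∃ β : ℂ, μ (b 0) = lam • b 0 ∧ μ (b 1) = β • b 1) := by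
  haveI : Nontrivial V := Module.nontrivial_of_finrank_pos (by rw [hV]; norm_num)
  obtain ⟨lam, hlam⟩ := Module.End.exists_eigenvalue (μ : Module.End ℂ V)
  obtain ⟨v, hv⟩ := hlam.exists_hasEigenvector
  have hvne : v ≠ 0 := hv.right
  have hμv : μ v = lam • v := hv.apply_eq_smul
  obtain ⟨w, hw⟩ : ∃ w, w ∉ Submodule.span ℂ {v} := by
    by_contra hcon; push_neg at hcon
    have htop : Submodule.span ℂ {v} = ⊤ := Submodule.eq_top_iff'.mpr hcon
    have h1 := finrank_span_singleton (K := ℂ) hvne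
    rw [htop, finrank_top] at h1
    rw [h1] at hV; exact absurd hV (by norm_num)
  have hcard : Fintype.card (Fin 2) = Module.finrank ℂ V := by simp [hV]
  let b' : Module.Basis (Fin 2) ℂ V := basisOfLinearIndependentOfCardEqFinrank (pair_li hvne hw) hcard
  have hb'0 : b' 0 = v := by
    simp [b', coe_basisOfLinearIndependentOfCardEqFinrank]
  have hb'1 : b' 1 = w := by
    simp [b', coe_basisOfLinearIndependentOfCardEqFinrank]
  set α := b'.repr (μ w) 0 with hα_def
  set β := b'.repr (μ w) 1 with hβ_def
  have hμw : μ w = α • v + β • w := by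
    have hs := b'.sum_repr (μ w)
    rw [Fin.sum_univ_two, hb'0, hb'1] at hs
    exact hs.symm
  rcases eq_or_ne β lam with hβ | hβ
  · rcases eq_or_ne α 0 with hα | hα
    · exact ⟨b', lam, Or.inr ⟨lam, by rw [hb'0, hμv], by rw [hb'1, hμw, hα, hβ]; simp⟩⟩
    · -- Jordan block case
      have hw2 : α⁻¹ • w ∉ Submodule.span ℂ {v} := by
        intro hmem
        apply hw
        have h2 := Submodule.smul_mem _ α hmem
        rwa [smul_smul, mul_inv_cancel₀ hα, one_smul] at h2
      let b : Module.Basis (Fin 2) ℂ V := basisOfLinearIndependentOfCardEqFinrank (pair_li hvne hw2) hcard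
      have hb0 : b 0 = v := by simp [b, coe_basisOfLinearIndependentOfCardEqFinrank]
      have hb1 : b 1 = α⁻¹ • w := by simp [b, coe_basisOfLinearIndependentOfCardEqFinrank]
      refine ⟨b, lam, Or.inl ⟨by rw [hb0, hμv], ?_⟩⟩
      rw [hb0, hb1, map_smul, hμw, hβ]
      match_scalars
      · field_simp
      · ring
  · -- diagonalizable case
    have hne : β - lam ≠ 0 := sub_ne_zero_of_ne hβ
    set cc := α / (β - lam) with hcc_def
    have hw2 : w + cc • v ∉ Submodule.span ℂ {v} := by
      intro hmem
      apply hw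
      have h2 := Submodule.sub_mem _ hmem
        (Submodule.smul_mem _ cc (Submodule.mem_span_singleton_self v))
      simpa using h2
    let b : Module.Basis (Fin 2) ℂ V := basisOfLinearIndependentOfCardEqFinrank (pair_li hvne hw2) hcard
    have hb0 : b 0 = v := by simp [b, coe_basisOfLinearIndependentOfCardEqFinrank]
    have hb1 : b 1 = w + cc • v := by simp [b, coe_basisOfLinearIndependentOfCardEqFinrank]
    refine ⟨b, lam, Or.inr ⟨β, by rw [hb0, hμv], ?_⟩⟩
    rw [hb1, map_add, map_smul, hμw, hμv]
    match_scalars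
    · rw [hcc_def]; field_simp
      ring
    · ring

end TreeAux

open TensorProduct in
/-- Classification of tree-compatible maps when `D_E` is `m`-dimensional over `ℂ` and
`D_V` is 2-dimensional: `φ` is tree-compatible iff in some basis its matrix is a block
matrix all of whose 2×2 blocks are of the form `J(a,b) = [[a,b],[0,a]]`, or all of the
form `D(a,b) = [[a,0],[0,b]]`. -/
theorem treeCompatible_classification_dim_two (m : ℕ) (E V : Type*)
    [AddCommGroup E] [Module ℂ E] [AddCommGroup V] [Module ℂ V]
    [FiniteDimensional ℂ E] [FiniteDimensional ℂ V]
    (hE : Module.finrank ℂ E = m) (hV : Module.finrank ℂ V = 2)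
    (φ : TensorProduct ℂ E V →ₗ[ℂ] TensorProduct ℂ E V) :
    TreeCompatible ℂ E V φ ↔
      ∃ (a : Module.Basis (Fin m) ℂ E) (b : Module.Basis (Fin 2) ℂ V)
        (A B : Matrix (Fin m) (Fin m) ℂ),
        (∀ j : Fin m,
            φ (a j ⊗ₜ b 0) = ∑ i, A i j • (a i ⊗ₜ[ℂ] b 0) ∧
            φ (a j ⊗ₜ b 1) = ∑ i, (B i j • (a i ⊗ₜ[ℂ] b 0) + A i j • (a i ⊗ₜ[ℂ] b 1))) ∨
        (∀ j : Fin m,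
            φ (a j ⊗ₜ b 0) = ∑ i, A i j • (a i ⊗ₜ[ℂ] b 0) ∧
            φ (a j ⊗ₜ b 1) = ∑ i, B i j • (a i ⊗ₜ[ℂ] b 1)) := by
  classical
  constructor
  · -- forward direction
    intro hc
    let a : Module.Basis (Fin m) ℂ E := Module.finBasisOfFinrankEq ℂ E hE
    let c : Module.Basis (Fin 2) ℂ V := Module.finBasisOfFinrankEq ℂ V hV
    let πV : Fin 2 → (TensorProduct ℂ E V →ₗ[ℂ] E) := fun i =>
      (TensorProduct.rid ℂ E).toLinearMap ∘ₗ LinearMap.lTensor E (c.coord i)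
    have πV_tmul : ∀ (i : Fin 2) (x : E) (v : V), πV i (x ⊗ₜ[ℂ] v) = c.repr v i • x := by
      intro i x v
      simp [πV, Module.Basis.coord_apply]
    have hπ00 : ∀ x : E, πV 0 (x ⊗ₜ[ℂ] c 0) = x := fun x => by
      rw [πV_tmul, Module.Basis.repr_self, Finsupp.single_eq_same, one_smul]
    have hπ11 : ∀ x : E, πV 1 (x ⊗ₜ[ℂ] c 1) = x := fun x => by
      rw [πV_tmul, Module.Basis.repr_self, Finsupp.single_eq_same, one_smul]
    have hπ01 : ∀ x : E, πV 0 (x ⊗ₜ[ℂ] c 1) = 0 := fun x => by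
      rw [πV_tmul, Module.Basis.repr_self, Finsupp.single_eq_of_ne (by decide), zero_smul]
    have hπ10 : ∀ x : E, πV 1 (x ⊗ₜ[ℂ] c 0) = 0 := fun x => by
      rw [πV_tmul, Module.Basis.repr_self, Finsupp.single_eq_of_ne (by decide), zero_smul]
    have hdec : ∀ z : TensorProduct ℂ E V, z = (πV 0 z) ⊗ₜ[ℂ] c 0 + (πV 1 z) ⊗ₜ[ℂ] c 1 := by
      intro z
      induction z using TensorProduct.induction_on with
      | zero => simp
      | tmul x v =>
          rw [πV_tmul, πV_tmul]
          have hv := c.sum_repr v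
          rw [Fin.sum_univ_two] at hv
          rw [← smul_tmul', ← smul_tmul', ← tmul_smul, ← tmul_smul, ← tmul_add, hv]
      | add z₁ z₂ h₁ h₂ =>
          rw [map_add, map_add, add_tmul, add_tmul]
          conv_lhs => rw [h₁, h₂]
          abel
    set Pm : E →ₗ[ℂ] E := πV 0 ∘ₗ φ ∘ₗ TreeAux.ins (c 0) with hPm_def
    set Rm : E →ₗ[ℂ] E := πV 1 ∘ₗ φ ∘ₗ TreeAux.ins (c 0) with hRm_def
    set Qm : E →ₗ[ℂ] E := πV 0 ∘ₗ φ ∘ₗ TreeAux.ins (c 1) with hQm_def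
    set Sm : E →ₗ[ℂ] E := πV 1 ∘ₗ φ ∘ₗ TreeAux.ins (c 1) with hSm_def
    have h0 : ∀ e : E, φ (e ⊗ₜ[ℂ] c 0) = Pm e ⊗ₜ[ℂ] c 0 + Rm e ⊗ₜ[ℂ] c 1 := by
      intro e
      have hd := hdec (φ (e ⊗ₜ[ℂ] c 0))
      simpa only [hPm_def, hRm_def, LinearMap.comp_apply, TreeAux.ins_apply] using hd
    have h1 : ∀ e : E, φ (e ⊗ₜ[ℂ] c 1) = Qm e ⊗ₜ[ℂ] c 0 + Sm e ⊗ₜ[ℂ] c 1 := by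
      intro e
      have hd := hdec (φ (e ⊗ₜ[ℂ] c 1))
      simpa only [hQm_def, hSm_def, LinearMap.comp_apply, TreeAux.ins_apply] using hd
    have eqt : ∀ (x y : E) (k : Fin 2),
        phi13 ℂ E V φ (LinearMap.lTensor E φ (x ⊗ₜ[ℂ] (y ⊗ₜ[ℂ] c k))) =
          LinearMap.lTensor E φ (phi13 ℂ E V φ (x ⊗ₜ[ℂ] (y ⊗ₜ[ℂ] c k))) := by
      intro x y k
      have h := LinearMap.ext_iff.mp hc (x ⊗ₜ[ℂ] (y ⊗ₜ[ℂ] c k))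
      simpa only [LinearMap.comp_apply] using h
    have comp : ∀ (x y : E) (i k : Fin 2),
        LinearMap.lTensor E (πV i) (phi13 ℂ E V φ (LinearMap.lTensor E φ (x ⊗ₜ[ℂ] (y ⊗ₜ[ℂ] c k)))) =
        LinearMap.lTensor E (πV i) (LinearMap.lTensor E φ (phi13 ℂ E V φ (x ⊗ₜ[ℂ] (y ⊗ₜ[ℂ] c k)))) :=
      fun x y i k => congrArg _ (eqt x y k)
    have C1 : ∀ x y : E, Qm x ⊗ₜ[ℂ] Rm y = Rm x ⊗ₜ[ℂ] Qm y := by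
      intro x y
      have h := comp x y 0 0
      simp only [LinearMap.lTensor_tmul, TreeAux.phi13_tmul, h0, h1, tmul_add, map_add,
        TensorProduct.leftComm_tmul, hπ00, hπ01, hπ10, hπ11, tmul_zero, add_zero, zero_add] at h
      linear_combination (norm := module) h
    have C3 : ∀ x y : E, (Pm x - Sm x) ⊗ₜ[ℂ] Rm y = Rm x ⊗ₜ[ℂ] (Pm y - Sm y) := by
      intro x y
      have h := comp x y 1 0
      simp only [LinearMap.lTensor_tmul, TreeAux.phi13_tmul, h0, h1, tmul_add, map_add,
        TensorProduct.leftComm_tmul, hπ00, hπ01, hπ10, hπ11, tmul_zero, add_zero, zero_add] at h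
      rw [sub_tmul, tmul_sub]
      linear_combination (norm := module) -h
    have C2 : ∀ x y : E, (Pm x - Sm x) ⊗ₜ[ℂ] Qm y = Qm x ⊗ₜ[ℂ] (Pm y - Sm y) := by
      intro x y
      have h := comp x y 0 1
      simp only [LinearMap.lTensor_tmul, TreeAux.phi13_tmul, h0, h1, tmul_add, map_add,
        TensorProduct.leftComm_tmul, hπ00, hπ01, hπ10, hπ11, tmul_zero, add_zero, zero_add] at h
      rw [sub_tmul, tmul_sub]
      linear_combination (norm := module) h
    -- linear dependence
    have d2 := TreeAux.tensor_dep (Pm - Sm) Qm (fun x y => by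
      simpa only [LinearMap.sub_apply] using C2 x y)
    have d3 := TreeAux.tensor_dep (Pm - Sm) Rm (fun x y => by
      simpa only [LinearMap.sub_apply] using C3 x y)
    have d1 := TreeAux.tensor_dep Qm Rm C1
    obtain ⟨X, t, q, r, hT, hQ, hR⟩ :
        ∃ (X : E →ₗ[ℂ] E) (t q r : ℂ), Pm - Sm = t • X ∧ Qm = q • X ∧ Rm = r • X := by
      rcases d2 with ⟨cq, hcq⟩ | ⟨ct, hct⟩
      · rcases d3 with ⟨cr, hcr⟩ | ⟨ct, hct⟩
        · exact ⟨Pm - Sm, 1, cq, cr, (one_smul _ _).symm, hcq, hcr⟩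
        · exact ⟨Rm, ct, cq * ct, 1, hct, by rw [hcq, hct, smul_smul], (one_smul _ _).symm⟩
      · rcases d1 with ⟨cr, hcr⟩ | ⟨cq, hcq⟩
        · exact ⟨Qm, ct, 1, cr, hct, (one_smul _ _).symm, hcr⟩
        · exact ⟨Rm, ct * cq, cq, 1, by rw [hct, hcq, smul_smul], hcq, (one_smul _ _).symm⟩
    have hPe : ∀ e, Pm e = Sm e + t • X e := by
      intro e
      have h := LinearMap.ext_iff.mp hT e
      simp only [LinearMap.sub_apply, LinearMap.smul_apply] at h
      rw [← h]; abel
    have hQe : ∀ e, Qm e = q • X e := fun e => by simp [hQ]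
    have hRe : ∀ e, Rm e = r • X e := fun e => by simp [hR]
    let μ : V →ₗ[ℂ] V := c.constr ℂ ![t • c 0 + r • c 1, q • c 0]
    have hμ0 : μ (c 0) = t • c 0 + r • c 1 := by
      simp [μ, Module.Basis.constr_basis]
    have hμ1 : μ (c 1) = q • c 0 := by
      simp [μ, Module.Basis.constr_basis]
    have hφv : ∀ (e : E) (v : V), φ (e ⊗ₜ[ℂ] v) = Sm e ⊗ₜ[ℂ] v + X e ⊗ₜ[ℂ] μ v := by
      intro e v
      have hv := c.sum_repr v
      rw [Fin.sum_univ_two] at hv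
      rw [← hv, tmul_add, tmul_smul, tmul_smul, map_add, map_smul, map_smul, h0 e, h1 e,
        map_add, map_smul, map_smul, hμ0, hμ1, hPe e, hQe e, hRe e]
      simp only [tmul_add, add_tmul, tmul_smul, smul_add, ← smul_tmul']
      module
    obtain ⟨b, lam, hbcase⟩ := TreeAux.jordan2 hV μ
    have hsum : ∀ (f : E →ₗ[ℂ] E) (j : Fin m) (w : V),
        ∑ i, (LinearMap.toMatrix a a f) i j • (a i ⊗ₜ[ℂ] w) = f (a j) ⊗ₜ[ℂ] w := by
      intro f j w
      rw [show f (a j) = ∑ i, (LinearMap.toMatrix a a f) i j • a i by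
            simp only [LinearMap.toMatrix_apply]; exact (a.sum_repr (f (a j))).symm,
          TensorProduct.sum_tmul]
      exact Finset.sum_congr rfl fun i _ => smul_tmul' _ _ _
    rcases hbcase with ⟨hμb0, hμb1⟩ | ⟨β, hμb0, hμb1⟩
    · refine ⟨a, b, LinearMap.toMatrix a a (Sm + lam • X), LinearMap.toMatrix a a X, Or.inl ?_⟩
      intro j
      constructor
      · rw [hφv, hμb0, hsum]
        simp only [LinearMap.add_apply, LinearMap.smul_apply, add_tmul, tmul_smul, ← smul_tmul']
        try module
      · rw [hφv, hμb1, Finset.sum_add_distrib, hsum, hsum]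
        simp only [LinearMap.add_apply, LinearMap.smul_apply, add_tmul, tmul_add, tmul_smul,
          ← smul_tmul']
        try module
    · refine ⟨a, b, LinearMap.toMatrix a a (Sm + lam • X), LinearMap.toMatrix a a (Sm + β • X),
        Or.inr ?_⟩
      intro j
      constructor
      · rw [hφv, hμb0, hsum]
        simp only [LinearMap.add_apply, LinearMap.smul_apply, add_tmul, tmul_smul, ← smul_tmul']
        try module
      · rw [hφv, hμb1, hsum]
        simp only [LinearMap.add_apply, LinearMap.smul_apply, add_tmul, tmul_smul, ← smul_tmul']
        try module
  · -- backward direction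
    rintro ⟨a, b, A, B, hcase⟩
    have hsum : ∀ (M : Matrix (Fin m) (Fin m) ℂ) (j : Fin m) (w : V),
        ∑ i, M i j • (a i ⊗ₜ[ℂ] w) = (Matrix.toLin a a M) (a j) ⊗ₜ[ℂ] w := by
      intro M j w
      rw [Matrix.toLin_self, TensorProduct.sum_tmul]
      exact Finset.sum_congr rfl fun i _ => (smul_tmul' _ _ _)
    rcases hcase with hJ | hD
    · have h0 : ∀ e : E, φ (e ⊗ₜ[ℂ] b 0) = (Matrix.toLin a a A) e ⊗ₜ[ℂ] b 0 := by
        intro e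
        have heq : φ ∘ₗ TreeAux.ins (b 0) = TreeAux.ins (b 0) ∘ₗ (Matrix.toLin a a A) := by
          apply a.ext; intro j
          simp only [LinearMap.comp_apply, TreeAux.ins_apply]
          rw [(hJ j).1, hsum]
        have h := LinearMap.ext_iff.mp heq e
        simpa only [LinearMap.comp_apply, TreeAux.ins_apply] using h
      have h1 : ∀ e : E, φ (e ⊗ₜ[ℂ] b 1) =
          (Matrix.toLin a a B) e ⊗ₜ[ℂ] b 0 + (Matrix.toLin a a A) e ⊗ₜ[ℂ] b 1 := by
        intro e
        have heq : φ ∘ₗ TreeAux.ins (b 1) =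
            TreeAux.ins (b 0) ∘ₗ (Matrix.toLin a a B) + TreeAux.ins (b 1) ∘ₗ (Matrix.toLin a a A) := by
          apply a.ext; intro j
          simp only [LinearMap.comp_apply, TreeAux.ins_apply, LinearMap.add_apply]
          rw [(hJ j).2, Finset.sum_add_distrib, hsum, hsum]
        have h := LinearMap.ext_iff.mp heq e
        simpa only [LinearMap.comp_apply, TreeAux.ins_apply, LinearMap.add_apply] using h
      unfold TreeCompatible
      apply (a.tensorProduct (a.tensorProduct b)).ext
      rintro ⟨i, j, k⟩
      simp only [Module.Basis.tensorProduct_apply, LinearMap.comp_apply]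
      fin_cases k
      · simp only [Fin.mk_zero, Fin.mk_one, Fin.isValue, LinearMap.lTensor_tmul,
          TreeAux.phi13_tmul, h0, h1, tmul_add, map_add, TensorProduct.leftComm_tmul]
      · simp only [Fin.mk_zero, Fin.mk_one, Fin.isValue, LinearMap.lTensor_tmul,
          TreeAux.phi13_tmul, h0, h1, tmul_add, map_add, TensorProduct.leftComm_tmul]
        abel
    · have h0 : ∀ e : E, φ (e ⊗ₜ[ℂ] b 0) = (Matrix.toLin a a A) e ⊗ₜ[ℂ] b 0 := by
        intro e
        have heq : φ ∘ₗ TreeAux.ins (b 0) = TreeAux.ins (b 0) ∘ₗ (Matrix.toLin a a A) := by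
          apply a.ext; intro j
          simp only [LinearMap.comp_apply, TreeAux.ins_apply]
          rw [(hD j).1, hsum]
        have h := LinearMap.ext_iff.mp heq e
        simpa only [LinearMap.comp_apply, TreeAux.ins_apply] using h
      have h1 : ∀ e : E, φ (e ⊗ₜ[ℂ] b 1) = (Matrix.toLin a a B) e ⊗ₜ[ℂ] b 1 := by
        intro e
        have heq : φ ∘ₗ TreeAux.ins (b 1) = TreeAux.ins (b 1) ∘ₗ (Matrix.toLin a a B) := by
          apply a.ext; intro j
          simp only [LinearMap.comp_apply, TreeAux.ins_apply]
          rw [(hD j).2, hsum]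
        have h := LinearMap.ext_iff.mp heq e
        simpa only [LinearMap.comp_apply, TreeAux.ins_apply] using h
      unfold TreeCompatible
      apply (a.tensorProduct (a.tensorProduct b)).ext
      rintro ⟨i, j, k⟩
      simp only [Module.Basis.tensorProduct_apply, LinearMap.comp_apply]
      fin_cases k
      · simp only [Fin.mk_zero, Fin.mk_one, Fin.isValue, LinearMap.lTensor_tmul,
          TreeAux.phi13_tmul, h0, h1, tmul_add, map_add, TensorProduct.leftComm_tmul]
      · simp only [Fin.mk_zero, Fin.mk_one, Fin.isValue, LinearMap.lTensor_tmul,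
          TreeAux.phi13_tmul, h0, h1, tmul_add, map_add, TensorProduct.leftComm_tmul]
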